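/- Let n ≥ 1 and let E, G : ℝⁿ × ℝⁿ → ℝ^{n×n} and A : ℝⁿ × ℝⁿ → ℝ^{n×n} be matrix-valued functions with E(q,p) and G(q,p) skew-symmetric for every (q,p). Let H : ℝⁿ × ℝⁿ → ℝ be differentiable with H(q, p) = H(q, −p) for all q, p. Suppose q, p : ℝ → ℝⁿ are differentiable and satisfy the state-dependent non-canonical Hamilton equations (q'(t), p'(t))ᵀ = [[E(q(t),p(t)), A(q(t),p(t))], [−A(q(t),p(t))ᵀ, G(q(t),p(t))]] · (∇_q H(q(t),p(t)), ∇_p H(q(t),p(t)))ᵀ for all t. Fix τ ∈ ℝ and define q̃(t) = q(τ − t), p̃(t) = −p(τ − t). Then for all t, (q̃'(t), p̃'(t))ᵀ = [[−E(q̃(t),−p̃(t)), A(q̃(t),−p̃(t))], [−A(q̃(t),−p̃(t))ᵀ, −G(q̃(t),−p̃(t))]] · (∇_q H(q̃(t),p̃(t)), ∇_p H(q̃(t),p̃(t)))ᵀ. -/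

import Mathlib

open Matrix

/-- Coordinate gradient of a function on `ι → ℝ`. -/
noncomputable def grad {ι : Type*} [Fintype ι] [DecidableEq ι]
    (f : (ι → ℝ) → ℝ) (x : ι → ℝ) : ι → ℝ :=
  fun i => fderiv ℝ f x (Pi.single i 1)

lemma grad_neg_of_even {ι : Type*} [Fintype ι] [DecidableEq ι]
    (f : (ι → ℝ) → ℝ) (hf : Differentiable ℝ f)
    (hsym : ∀ x, f (-x) = f x) (x : ι → ℝ) :
    grad f (-x) = -(grad f x) := by
  have hneg : Differentiable ℝ (fun y : ι → ℝ => -y) := differentiable_id.neg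
  have hfd : ∀ y : ι → ℝ, ∀ v, fderiv ℝ f y v = fderiv ℝ f (-y) (-v) := by
    intro y v
    have h1 : f = fun z => f (-z) := by funext z; rw [hsym]
    have h2 : fderiv ℝ (fun z : ι → ℝ => f (-z)) y
        = (fderiv ℝ f (-y)).comp (fderiv ℝ (fun z : ι → ℝ => -z) y) :=
      fderiv_comp y (hf _) (hneg y)
    have h3 : fderiv ℝ (fun z : ι → ℝ => -z) y v = -v := by
      have : fderiv ℝ (fun z : ι → ℝ => -(id z)) y = -(fderiv ℝ (id : (ι → ℝ) → ι → ℝ) y) :=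
        fderiv_fun_neg
      simpa [fderiv_id] using congrFun (congrArg DFunLike.coe this) v
    conv_lhs => rw [h1]
    rw [h2]
    simp [ContinuousLinearMap.comp_apply, h3]
  funext i
  simp only [grad, Pi.neg_apply]
  rw [show fderiv ℝ f (-x) (Pi.single i 1)
      = fderiv ℝ f (-(-x)) (-(Pi.single i 1)) from hfd _ _]
  simp

/-- Time reversal of non-canonical Hamiltonian dynamics with a state-dependent
Poisson matrix `[[E(q,p), A(q,p)], [−A(q,p)ᵀ, G(q,p)]]`: the reversed trajectory
`(q(τ−t), −p(τ−t))` obeys the dynamics with the state-dependent time-reversal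
Poisson matrix `[[−E(q,−p), A(q,−p)], [−A(q,−p)ᵀ, −G(q,−p)]]`. -/
theorem stmt1 (n : ℕ) (hn : 1 ≤ n)
    (E G A : (Fin n → ℝ) → (Fin n → ℝ) → Matrix (Fin n) (Fin n) ℝ)
    (hE : ∀ q p, (E q p)ᵀ = -(E q p)) (hG : ∀ q p, (G q p)ᵀ = -(G q p))
    (H : (Fin n → ℝ) → (Fin n → ℝ) → ℝ)
    (hH : Differentiable ℝ (fun z : (Fin n → ℝ) × (Fin n → ℝ) => H z.1 z.2))
    (hHsym : ∀ q p, H q (-p) = H q p)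
    (q p : ℝ → (Fin n → ℝ))
    (hq : Differentiable ℝ q) (hp : Differentiable ℝ p)
    (hdyn : ∀ t : ℝ,
      Sum.elim (deriv q t) (deriv p t) =
        (fromBlocks (E (q t) (p t)) (A (q t) (p t))
                    (-(A (q t) (p t))ᵀ) (G (q t) (p t))) *ᵥ
          Sum.elim (grad (fun q' => H q' (p t)) (q t))
                   (grad (fun p' => H (q t) p') (p t)))
    (τ : ℝ) (qr pr : ℝ → (Fin n → ℝ))
    (hqr : qr = fun t => q (τ - t)) (hpr : pr = fun t => -p (τ - t)) :
    ∀ t : ℝ,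
      Sum.elim (deriv qr t) (deriv pr t) =
        (fromBlocks (-(E (qr t) (-pr t))) (A (qr t) (-pr t))
                    (-(A (qr t) (-pr t))ᵀ) (-(G (qr t) (-pr t)))) *ᵥ
          Sum.elim (grad (fun q' => H q' (pr t)) (qr t))
                   (grad (fun p' => H (qr t) p') (pr t)) := by
  intro t
  set s := τ - t with hs
  -- derivatives of reversed trajectories
  have hqr' : deriv qr t = -deriv q s := by
    rw [hqr]; exact deriv_comp_const_sub q τ t
  have hpr' : deriv pr t = deriv p s := by
    rw [hpr]
    have : deriv (fun t' => -p (τ - t')) t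
        = -deriv (fun t' => p (τ - t')) t := deriv.neg
    rw [this, deriv_comp_const_sub p τ t, neg_neg]
  have hq1 : qr t = q s := by rw [hqr]
  have hp1 : pr t = -p s := by rw [hpr]
  have hnp : -pr t = p s := by rw [hp1, neg_neg]
  -- gradient identities
  have hg1 : grad (fun q' => H q' (pr t)) (qr t)
      = grad (fun q' => H q' (p s)) (q s) := by
    rw [hq1]
    have : (fun q' => H q' (pr t)) = fun q' => H q' (p s) := by
      funext x; rw [hp1, hHsym]
    rw [this]
  have hfps : Differentiable ℝ (fun p' => H (q s) p') := by
    have : (fun p' : Fin n → ℝ => H (q s) p')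
        = (fun z : (Fin n → ℝ) × (Fin n → ℝ) => H z.1 z.2)
            ∘ (fun p' => (q s, p')) := rfl
    rw [this]
    exact hH.comp ((differentiable_const _).prodMk differentiable_id)
  have hg2 : grad (fun p' => H (qr t) p') (pr t)
      = -(grad (fun p' => H (q s) p') (p s)) := by
    rw [hq1, hp1]
    exact grad_neg_of_even _ hfps (fun x => hHsym _ _) _
  have hd := hdyn s
  rw [fromBlocks_mulVec] at hd
  have hdq : deriv q s = E (q s) (p s) *ᵥ grad (fun q' => H q' (p s)) (q s)
      + A (q s) (p s) *ᵥ grad (fun p' => H (q s) p') (p s) := by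
    funext i; exact congrFun hd (Sum.inl i)
  have hdp : deriv p s = (-(A (q s) (p s))ᵀ) *ᵥ grad (fun q' => H q' (p s)) (q s)
      + G (q s) (p s) *ᵥ grad (fun p' => H (q s) p') (p s) := by
    funext i; exact congrFun hd (Sum.inr i)
  rw [hqr', hpr', hg1, hg2, hq1, hnp, fromBlocks_mulVec, hdq, hdp]
  ext i
  cases i with
  | inl i =>
      simp [Matrix.mulVec_neg, Matrix.neg_mulVec, neg_add]
      ring
  | inr i =>
      simp [Matrix.mulVec_neg, Matrix.neg_mulVec]
      try ring
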